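/- Let K be an infinite field and let A be a K-algebra. For every polynomial f = f(x_1, …, x_m) in the free associative algebra K⟨x_1,…,x_m⟩, the K-linear span of the image f(A) is a Lie ideal of A; that is, for every a ∈ A and every v in the K-linear span of f(A), the commutator [a, v] = av − va lies in the K-linear span of f(A). -/

import Mathlib

open Polynomial

private lemma coeffs_mem_span {K V : Type*} [Field K] [Infinite K]
    [AddCommGroup V] [Module K V] (n : ℕ) (g : ℕ → V) (W : Submodule K V)
    (h : ∀ t : K, ∑ k ∈ Finset.range n, t ^ k • g k ∈ W) : ∀ k < n, g k ∈ W := by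
  intro k hk
  have hmk : W.mkQ (g k) = 0 → g k ∈ W := by
    rw [Submodule.mkQ_apply, Submodule.Quotient.mk_eq_zero]; exact id
  apply hmk
  rw [← Module.forall_dual_apply_eq_zero_iff K]
  intro φ
  have hp : (∑ j ∈ Finset.range n, C (φ (W.mkQ (g j))) * X ^ j : K[X]) = 0 := by
    apply Polynomial.zero_of_eval_zero
    intro t
    have h0 : W.mkQ (∑ j ∈ Finset.range n, t ^ j • g j) = 0 := by
      rw [Submodule.mkQ_apply, Submodule.Quotient.mk_eq_zero]; exact h t
    rw [map_sum] at h0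
    have h1 := congrArg φ h0
    rw [map_sum, map_zero] at h1
    rw [Polynomial.eval_finset_sum]
    simp only [Polynomial.eval_mul, Polynomial.eval_C, Polynomial.eval_pow, Polynomial.eval_X]
    rw [← h1]
    congr 1; ext j; rw [map_smul, map_smul, smul_eq_mul, mul_comm]
  have h2 := congrArg (fun p => Polynomial.coeff p k) hp
  simpa [Polynomial.finset_sum_coeff, Polynomial.coeff_C_mul,
    Polynomial.coeff_X_pow, Finset.sum_ite_eq', hk] using h2


private lemma coeff_key {K A : Type*} [Field K] [Ring A] [Algebra K A] {m : ℕ}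
    (a : A) (c : Fin m → A) (g : FreeAlgebra K (Fin m)) :
    (FreeAlgebra.lift K (fun i => (C (c i) + C (a * c i - c i * a) * X : A[X])) g).coeff 0
      = FreeAlgebra.lift K c g ∧
    (FreeAlgebra.lift K (fun i => (C (c i) + C (a * c i - c i * a) * X : A[X])) g).coeff 1
      = a * FreeAlgebra.lift K c g - FreeAlgebra.lift K c g * a := by
  induction g using FreeAlgebra.induction with
  | grade0 r =>
    constructor
    · simp [AlgHom.commutes, Polynomial.algebraMap_apply]
    · simp only [AlgHom.commutes, Polynomial.algebraMap_apply, Polynomial.coeff_C]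
      simp [Algebra.commutes]
  | grade1 i => simp
  | mul x y hx hy =>
    obtain ⟨hx0, hx1⟩ := hx; obtain ⟨hy0, hy1⟩ := hy
    constructor
    · rw [map_mul, Polynomial.mul_coeff_zero, hx0, hy0, map_mul]
    · rw [map_mul, map_mul, Polynomial.mul_coeff_one, hx0, hx1, hy0, hy1]
      noncomm_ring
  | add x y hx hy =>
    obtain ⟨hx0, hx1⟩ := hx; obtain ⟨hy0, hy1⟩ := hy
    constructor
    · rw [map_add, Polynomial.coeff_add, hx0, hy0, map_add]
    · rw [map_add, map_add, Polynomial.coeff_add, hx1, hy1]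
      noncomm_ring

/-- Over an infinite field `K`, for any polynomial `f ∈ K⟨x_1,…,x_m⟩` and any `K`-algebra `A`,
the `K`-linear span of the image of `f` on `A` is a Lie ideal of `A`. -/
theorem span_image_is_lie_ideal {K A : Type*} [Field K] [Infinite K]
    [Ring A] [Algebra K A] (m : ℕ) (f : FreeAlgebra K (Fin m)) :
    ∀ a : A,
      ∀ v ∈ Submodule.span K {y : A | ∃ c : Fin m → A, FreeAlgebra.lift K c f = y},
        a * v - v * a ∈
          Submodule.span K {y : A | ∃ c : Fin m → A, FreeAlgebra.lift K c f = y} := by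
  intro a v hv
  set S : Set A := {y : A | ∃ c : Fin m → A, FreeAlgebra.lift K c f = y} with hS
  set W := Submodule.span K S with hW
  induction hv using Submodule.span_induction with
  | mem y hy =>
    obtain ⟨c, rfl⟩ := hy
    set d : Fin m → A := fun i => a * c i - c i * a with hd
    set P : A[X] :=
      FreeAlgebra.lift K (fun i => (C (c i) + C (d i) * X : A[X])) f with hP
    -- the evaluation algebra homomorphism at a central element
    have key : ∀ k < P.natDegree + 2, P.coeff k ∈ W := by
      apply coeffs_mem_span
      intro t
      set evt : A[X] →ₐ[K] A :=
        Polynomial.eval₂AlgHom (AlgHom.id K A) (algebraMap K A t)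
          (fun x => (Algebra.commutes t x).symm) with hevt
      have hcomp : evt.comp
          (FreeAlgebra.lift K (fun i => (C (c i) + C (d i) * X : A[X])))
          = FreeAlgebra.lift K (fun i => c i + t • d i) := by
        apply FreeAlgebra.hom_ext
        funext i
        simp only [Function.comp_apply, AlgHom.comp_apply, FreeAlgebra.lift_ι_apply]
        rw [map_add, map_mul]
        have h1 : evt (C (c i)) = c i := by
          exact Polynomial.eval₂_C _ _
        have h2 : evt (C (d i)) = d i := by
          exact Polynomial.eval₂_C _ _
        have h3 : evt X = algebraMap K A t := by
          exact Polynomial.eval₂_X _ _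
        rw [h1, h2, h3, Algebra.algebraMap_eq_smul_one, mul_smul_comm, mul_one]
      have hval : evt P = FreeAlgebra.lift K (fun i => c i + t • d i) f := by
        rw [hP, ← hcomp, AlgHom.comp_apply]
      have hsum : evt P = ∑ k ∈ Finset.range (P.natDegree + 2), t ^ k • P.coeff k := by
        have := Polynomial.eval₂_eq_sum_range' (S := A)
          ((AlgHom.id K A : A →ₐ[K] A) : A →+* A)
          (p := P) (n := P.natDegree + 2) (by omega) (algebraMap K A t)
        rw [hevt]
        show Polynomial.eval₂ _ _ _ = _
        rw [this]
        congr 1; ext k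
        rw [← map_pow, Algebra.algebraMap_eq_smul_one, mul_smul_comm, mul_one]
        rfl
      rw [← hsum, hval]
      exact Submodule.subset_span ⟨_, rfl⟩
    have h1 : P.coeff 1 ∈ W := key 1 (by omega)
    have h2 := (coeff_key a c f).2
    rw [← hP] at h2
    rw [← h2]
    exact h1
  | zero => simp only [mul_zero, zero_mul, sub_zero]; exact W.zero_mem
  | add x y _ _ hx hy =>
    have : a * (x + y) - (x + y) * a = (a * x - x * a) + (a * y - y * a) := by noncomm_ring
    rw [this]; exact W.add_mem hx hy
  | smul t x _ hx =>
    have : a * (t • x) - (t • x) * a = t • (a * x - x * a) := by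
      rw [mul_smul_comm, smul_mul_assoc, smul_sub]
    rw [this]; exact W.smul_mem t hx
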